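/- Suppose v : [0,∞) → ℝ is differentiable, nonnegative, and satisfies v̇(t) ≤ -(a v(t)^{1-1/ξ} + b v(t)^{1+1/ξ}) whenever v(t) > 0, where a, b > 0 and ξ > 1. Then for all t ∈ [0, τ̂], where τ̂ = (ξ/√(ab)) arctan(√(b/a) v(0)^{1/ξ}), one has v(t) ≤ ( √(a/b) tan( arctan(√(b/a) v(0)^{1/ξ}) - (√(ab)/ξ) t ) )^{ξ}. In particular v(τ̂) = 0 and τ̂ ≤ ξπ/(2√(ab)). -/

import Mathlib

/-- Explicit tangent-function bound from the proof of Theorem 3 of the paper. -/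
theorem stmt_11 (v v' : ℝ → ℝ) (a b ξ : ℝ) (ha : 0 < a) (hb : 0 < b) (hξ : 1 < ξ)
    (hderiv : ∀ t, 0 ≤ t → HasDerivAt v (v' t) t)
    (hnn : ∀ t, 0 ≤ t → 0 ≤ v t)
    (hdec : ∀ t, 0 ≤ t → 0 < v t →
      v' t ≤ -(a * v t ^ (1 - 1 / ξ) + b * v t ^ (1 + 1 / ξ))) :
    (∀ t ∈ Set.Icc (0:ℝ)
        (ξ / Real.sqrt (a * b) * Real.arctan (Real.sqrt (b / a) * v 0 ^ (1 / ξ))),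
      v t ≤ (Real.sqrt (a / b) *
        Real.tan (Real.arctan (Real.sqrt (b / a) * v 0 ^ (1 / ξ)) -
          Real.sqrt (a * b) / ξ * t)) ^ ξ) ∧
    v (ξ / Real.sqrt (a * b) * Real.arctan (Real.sqrt (b / a) * v 0 ^ (1 / ξ))) = 0 ∧
    ξ / Real.sqrt (a * b) * Real.arctan (Real.sqrt (b / a) * v 0 ^ (1 / ξ)) ≤
      ξ * Real.pi / (2 * Real.sqrt (a * b)) := by
  have hξ0 : (0:ℝ) < ξ := lt_trans one_pos hξ
  set p : ℝ := 1 / ξ with hpdef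
  have hp : 0 < p := by positivity
  have hsab : 0 < Real.sqrt (a * b) := Real.sqrt_pos.2 (by positivity)
  set k : ℝ := Real.sqrt (b / a) with hkdef
  set K : ℝ := Real.sqrt (a / b) with hKdef
  have hk : 0 < k := Real.sqrt_pos.2 (by positivity)
  have hK : 0 < K := Real.sqrt_pos.2 (by positivity)
  set c : ℝ := Real.sqrt (a * b) / ξ with hcdef
  have hc : 0 < c := by positivity
  set θ : ℝ := Real.arctan (k * v 0 ^ p) with hθdef
  set τ : ℝ := ξ / Real.sqrt (a * b) * θ with hτdef
  -- basic sqrt identities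
  have hk2 : k ^ 2 = b / a := Real.sq_sqrt (by positivity)
  have hka : k * a = Real.sqrt (a * b) := by
    have h1 : (k * a) ^ 2 = a * b := by
      rw [mul_pow, hk2]; field_simp
    have h2 : (0:ℝ) ≤ k * a := by positivity
    rw [← Real.sqrt_sq h2, h1]
  have hKk : K * k = 1 := by
    rw [hKdef, hkdef, ← Real.sqrt_mul (by positivity)]
    rw [show a / b * (b / a) = 1 by field_simp]
    exact Real.sqrt_one
  have hcval : c = k * a * p := by
    rw [hcdef, ← hka, hpdef]; ring
  -- θ ≥ 0, θ < π/2, τ ≥ 0, c * τ = θ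
  have hθ0 : 0 ≤ θ := by
    have h := Real.arctan_strictMono.monotone
      (mul_nonneg hk.le (Real.rpow_nonneg (hnn 0 le_rfl) p))
    rw [Real.arctan_zero] at h
    exact h
  have hθlt : θ < Real.pi / 2 := Real.arctan_lt_pi_div_two _
  have hτ0 : 0 ≤ τ := by rw [hτdef]; positivity
  have hcτ : c * τ = θ := by
    rw [hcdef, hτdef]
    field_simp
  -- v is antitone on [0, ∞)
  have hderivle : ∀ s ∈ Set.Ioi (0:ℝ), deriv v s ≤ 0 := by
    intro s hs
    have hs0 : (0:ℝ) ≤ s := le_of_lt hs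
    rw [(hderiv s hs0).deriv]
    rcases (hnn s hs0).lt_or_eq with hv | hv
    · have h1 := hdec s hs0 hv
      have h2 : 0 < a * v s ^ (1 - p) + b * v s ^ (1 + p) := by positivity
      linarith
    · have hmin : IsLocalMin v s := by
        filter_upwards [eventually_gt_nhds hs] with x hx
        rw [← hv]; exact hnn x hx.le
      rw [hmin.hasDerivAt_eq_zero (hderiv s hs0)]
  have hanti : AntitoneOn v (Set.Ici 0) := by
    apply antitoneOn_of_deriv_nonpos (convex_Ici 0)
    · exact fun s hs => (hderiv s hs).continuousAt.continuousWithinAt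
    · intro s hs
      rw [interior_Ici] at hs
      exact (hderiv s (le_of_lt hs)).differentiableAt.differentiableWithinAt
    · intro s hs
      rw [interior_Ici] at hs
      exact hderivle s hs
  -- main bound
  have key : ∀ t ∈ Set.Icc (0:ℝ) τ, v t ≤ (K * Real.tan (θ - c * t)) ^ ξ := by
    rintro t ⟨ht0, htτ⟩
    have hct : 0 ≤ θ - c * t := by
      have h1 : c * t ≤ c * τ := mul_le_mul_of_nonneg_left htτ hc.le
      rw [hcτ] at h1; linarith
    have hct2 : θ - c * t < Real.pi / 2 := by
      have : 0 ≤ c * t := mul_nonneg hc.le ht0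
      linarith
    have hmemY : θ - c * t ∈ Set.Ioo (-(Real.pi / 2)) (Real.pi / 2) := by
      refine ⟨?_, hct2⟩
      have := Real.pi_pos; linarith
    have htannn : 0 ≤ Real.tan (θ - c * t) := by
      rw [← Real.tan_zero]
      rcases hct.lt_or_eq with h | h
      · have h0 : (0:ℝ) ∈ Set.Ioo (-(Real.pi / 2)) (Real.pi / 2) := by
          constructor <;> [linarith [Real.pi_pos]; linarith [Real.pi_pos]]
        exact le_of_lt (Real.strictMonoOn_tan h0 hmemY h)
      · rw [← h]
    rcases (hnn t ht0).eq_or_lt with hv0 | hv0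
    · rw [← hv0]
      exact Real.rpow_nonneg (mul_nonneg hK.le htannn) ξ
    · -- v positive on [0, t]
      have hvpos : ∀ s ∈ Set.Icc (0:ℝ) t, 0 < v s := by
        rintro s ⟨hs0, hst⟩
        exact lt_of_lt_of_le hv0 (hanti (Set.mem_Ici.2 hs0) (Set.mem_Ici.2 ht0) hst)
      set H : ℝ → ℝ := fun s => Real.arctan (k * v s ^ p) + c * s with hHdef
      have hHderiv : ∀ s ∈ Set.Icc (0:ℝ) t, HasDerivAt H
          (1 / (1 + (k * v s ^ p) ^ 2) * (k * (p * v s ^ (p - 1) * v' s)) + c * 1) s := by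
        intro s hs
        have hvs := hvpos s hs
        have h1 : HasDerivAt (fun s => v s ^ p) (p * v s ^ (p - 1) * v' s) s := by
          have := (Real.hasDerivAt_rpow_const (p := p)
            (Or.inl (ne_of_gt hvs))).comp s (hderiv s hs.1)
          exact this
        have h2 : HasDerivAt (fun s => k * v s ^ p) (k * (p * v s ^ (p - 1) * v' s)) s :=
          h1.const_mul k
        have h3 := (Real.hasDerivAt_arctan (k * v s ^ p)).comp s h2
        have h4 : HasDerivAt (fun s : ℝ => c * s) (c * 1) s := (hasDerivAt_id s).const_mul c
        exact h3.add h4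
      have hDle : ∀ s ∈ Set.Icc (0:ℝ) t,
          1 / (1 + (k * v s ^ p) ^ 2) * (k * (p * v s ^ (p - 1) * v' s)) + c * 1 ≤ 0 := by
        intro s hs
        have hvs := hvpos s hs
        have hv' := hdec s hs.1 hvs
        have hq : 0 < v s ^ p := Real.rpow_pos_of_pos hvs p
        have hA : 0 < v s ^ (p - 1) := Real.rpow_pos_of_pos hvs _
        have hA1 : v s ^ (p - 1) * v s ^ (1 - p) = 1 := by
          rw [← Real.rpow_add hvs, show p - 1 + (1 - p) = 0 by ring, Real.rpow_zero]
        have hA2 : v s ^ (p - 1) * v s ^ (1 + p) = v s ^ p * v s ^ p := by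
          rw [← Real.rpow_add hvs, ← Real.rpow_add hvs]
          congr 1; ring
        have hden : 0 < 1 + (k * v s ^ p) ^ 2 := by positivity
        have hE : c * (1 + (k * v s ^ p) ^ 2) = p * (k * a + k * b * (v s ^ p * v s ^ p)) := by
          rw [mul_pow, hk2, hcval]
          field_simp
        have h0 : (0:ℝ) ≤ k * (p * v s ^ (p - 1)) := by positivity
        have h1 := mul_le_mul_of_nonneg_left hv' h0
        have h2 : k * (p * v s ^ (p - 1)) * (-(a * v s ^ (1 - p) + b * v s ^ (1 + p)))
            = -(p * (k * a * (v s ^ (p - 1) * v s ^ (1 - p))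
                + k * b * (v s ^ (p - 1) * v s ^ (1 + p)))) := by ring
        rw [h2, hA1, hA2, mul_one, ← hE] at h1
        have h3 := mul_le_mul_of_nonneg_left h1
          (by positivity : (0:ℝ) ≤ 1 / (1 + (k * v s ^ p) ^ 2))
        have h4 : 1 / (1 + (k * v s ^ p) ^ 2) * -(c * (1 + (k * v s ^ p) ^ 2)) = -c := by
          field_simp
        rw [h4] at h3
        have h5 : 1 / (1 + (k * v s ^ p) ^ 2) * (k * (p * v s ^ (p - 1) * v' s))
            = 1 / (1 + (k * v s ^ p) ^ 2) * (k * (p * v s ^ (p - 1)) * v' s) := by ring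
        rw [h5]
        linarith
      have hHanti : AntitoneOn H (Set.Icc 0 t) := by
        apply antitoneOn_of_deriv_nonpos (convex_Icc 0 t)
        · exact fun s hs => (hHderiv s hs).continuousAt.continuousWithinAt
        · intro s hs
          rw [interior_Icc] at hs
          exact (hHderiv s (Set.Ioo_subset_Icc_self hs)).differentiableAt.differentiableWithinAt
        · intro s hs
          rw [interior_Icc] at hs
          have hs' := Set.Ioo_subset_Icc_self hs
          rw [(hHderiv s hs').deriv]
          exact hDle s hs'
      have hH := hHanti (Set.left_mem_Icc.2 ht0) (Set.right_mem_Icc.2 ht0) ht0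
      simp only [hHdef] at hH
      have harctan : Real.arctan (k * v t ^ p) ≤ θ - c * t := by
        rw [← hθdef] at hH
        rw [mul_zero, add_zero] at hH
        linarith
      have htan : k * v t ^ p ≤ Real.tan (θ - c * t) := by
        have h1 := Real.arctan_mem_Ioo (k * v t ^ p)
        have h2 := (Real.strictMonoOn_tan.le_iff_le h1 hmemY).2 harctan
        rwa [Real.tan_arctan] at h2
      have hfinal : v t ^ p ≤ K * Real.tan (θ - c * t) := by
        have h1 := mul_le_mul_of_nonneg_left htan hK.le
        calc v t ^ p = K * (k * v t ^ p) := by rw [← mul_assoc, hKk, one_mul]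
          _ ≤ K * Real.tan (θ - c * t) := h1
      have hvt : (v t ^ p) ^ ξ = v t := by
        rw [← Real.rpow_mul (hnn t ht0), hpdef, one_div, inv_mul_cancel₀ (ne_of_gt hξ0),
          Real.rpow_one]
      rw [← hvt]
      exact Real.rpow_le_rpow (Real.rpow_nonneg (hnn t ht0) p) hfinal hξ0.le
  refine ⟨key, ?_, ?_⟩
  · have h := key τ ⟨hτ0, le_rfl⟩
    rw [hcτ, sub_self, Real.tan_zero, mul_zero, Real.zero_rpow (ne_of_gt hξ0)] at h
    exact le_antisymm h (hnn τ hτ0)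
  · have h2 : ξ / Real.sqrt (a * b) * θ ≤ ξ / Real.sqrt (a * b) * (Real.pi / 2) :=
      mul_le_mul_of_nonneg_left hθlt.le (by positivity)
    calc τ ≤ ξ / Real.sqrt (a * b) * (Real.pi / 2) := h2
      _ = ξ * Real.pi / (2 * Real.sqrt (a * b)) := by
        field_simp
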